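/- Let V be a vector space over a field F and let {a,b} = [a,b] + λ(a) + μ(b) + s be a bi-affine bracket on V. Then for all o, a, b ∈ V one has {a,b} − {a,o} + {o,o} − {o,b} = [a−o, b−o]. Consequently, for any two points o, u ∈ V the linearized brackets D_o(a,b) := {a,b} − {a,o} + {o,o} − {o,b} and D_u satisfy D_u(a,b) = D_o(a−u+o, b−u+o), so the translation x ↦ x − o + u intertwines the fibre brackets at o and at u; in particular, when [−,−] satisfies the Leibniz rule, all fibres of the Leibniz affgebra are Leibniz algebras isomorphic to (V, [−,−]). -/
import Mathlib


/-- For the bi-affine bracket `{a,b} = B a b + lam a + mu b + s` and its fibre bracket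
`D o a b = {a,b} − {a,o} + {o,o} − {o,b}` at a point `o`:
(i) `D o a b = B (a−o) (b−o)`;
(ii) the translation `x ↦ x − u + o` intertwines the fibre brackets:
`D u a b = D o (a−u+o) (b−u+o)`;
(iii) if `B` satisfies the Leibniz rule, then every fibre bracket `E_o x y := D o x y + o`
satisfies the Leibniz rule on the tangent space at `o` (whose addition is
`x +_o y = x + y − o`), so all fibres are Leibniz algebras isomorphic to `(V, B)`. -/
theorem fibre_brackets_of_biaffine_bracket
    {F V : Type*} [Field F] [AddCommGroup V] [Module F V]
    (B : V →ₗ[F] V →ₗ[F] V) (lam mu : V →ₗ[F] V) (s : V)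
    (br : V → V → V) (hbr : ∀ a b, br a b = B a b + lam a + mu b + s)
    (D : V → V → V → V)
    (hD : ∀ o a b, D o a b = br a b - br a o + br o o - br o b) :
    (∀ o a b : V, D o a b = B (a - o) (b - o)) ∧
    (∀ o u a b : V, D u a b = D o (a - u + o) (b - u + o)) ∧
    ((∀ a b c : V, B (B a b) c = B (B a c) b + B a (B b c)) →
      ∀ o a b c : V,
        D o (D o a b + o) c + o =
          (D o (D o a c + o) b + o) + (D o a (D o b c + o) + o) - o) := by
  have key : ∀ o a b : V, D o a b = B (a - o) (b - o) := by
    intro o a b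
    simp only [hD, hbr, map_sub, LinearMap.sub_apply]
    abel
  refine ⟨key, ?_, ?_⟩
  · intro o u a b
    simp only [key]
    congr 1 <;> abel
  · intro hL o a b c
    simp only [key, add_sub_cancel_right]
    rw [hL]
    abel
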